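/- Consider the two-player mean-payoff game G with players ○ and □, vertices a and c controlled by ○ and vertices b and d controlled by □, and edges with weights (π_○, π_□): a → b with weight (0, 3), b → a with weight (0, 3), a → c with weight (0, 0), c → c with weight (1, 1), b → d with weight (0, 0), d → d with weight (2, 2). Then G admits no SPE from vertex a and no SPE from vertex b. -/

import Mathlib

noncomputable section

open Filter

/-- Prepend a finite list to an infinite sequence. -/
def prependList {V : Type} (h : List V) (ρ : ℕ → V) : ℕ → V :=
  fun n => if hn : n < h.length then h.get ⟨n, hn⟩ else ρ (n - h.length)

/-- A (turn-based, multiplayer) game on a graph: a finite directed graph `(V, E)`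
in which every vertex has an outgoing edge, a partition of the vertices among the
players (given by `control`), and an outcome function `payoff : Π → V^ω → ℝ`. -/
structure GameStruct (P V : Type) where
  E : V → V → Prop
  total : ∀ v, ∃ w, E v w
  control : V → P
  payoff : P → (ℕ → V) → ℝ

namespace GameStruct

variable {P V : Type}

/-- A strategy: given the history before the current vertex and the current vertex,
choose a successor along an edge. -/
structure Strategy (G : GameStruct P V) where
  toFun : List V → V → V
  valid : ∀ h v, G.E v (toFun h v)

/-- A complete strategy profile. -/
abbrev Profile (G : GameStruct P V) := P → G.Strategy

def step (G : GameStruct P V) (σ : G.Profile) (p : List V × V) : List V × V :=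
  (p.1 ++ [p.2], (σ (G.control p.2)).toFun p.1 p.2)

/-- The play induced by the profile `σ` from vertex `v`, after the past history `h`. -/
def play (G : GameStruct P V) (σ : G.Profile) (h : List V) (v : V) : ℕ → V :=
  fun n => ((G.step σ)^[n] (h, v)).2

/-- An infinite path in the graph. -/
def IsPlay (G : GameStruct P V) (ρ : ℕ → V) : Prop := ∀ n, G.E (ρ n) (ρ (n + 1))

def IsPlayFrom (G : GameStruct P V) (v₀ : V) (ρ : ℕ → V) : Prop := ρ 0 = v₀ ∧ G.IsPlay ρ

/-- A history: a finite nonempty path. -/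
def IsHist (G : GameStruct P V) (H : List V) : Prop := H ≠ [] ∧ List.Chain' G.E H

/-- `hv` is a history of the initialized game `G_{∥v₀}` (here `h` is the part strictly
before the last vertex `v`; it may be empty, in which case `v = v₀`). -/
def IsHistFrom (G : GameStruct P V) (v₀ : V) (h : List V) (v : V) : Prop :=
  List.Chain' G.E (h ++ [v]) ∧ (h ++ [v]).head? = some v₀

/-- The (finite) history `H` is compatible with the strategy `σ` of player `j`. -/
def CompatList (G : GameStruct P V) (σ : G.Strategy) (j : P) (H : List V) : Prop :=
  ∀ k u w, H[k]? = some u → H[k + 1]? = some w → G.control u = j →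
    w = σ.toFun (H.take k) u

/-- The history `H` is compatible with `σ̄_{-i}`, i.e. with every strategy of the
profile except possibly that of player `i`. -/
def CompatExcept (G : GameStruct P V) (i : P) (σ : G.Profile) (H : List V) : Prop :=
  ∀ j, j ≠ i → G.CompatList (σ j) j H

/-- A play `ρ` is `l`-consistent for the requirement `l : V → ℝ ∪ {±∞}`. -/
def Consistent (G : GameStruct P V) (l : V → EReal) (ρ : ℕ → V) : Prop :=
  ∀ n, l (ρ n) ≤ (G.payoff (G.control (ρ n)) (fun k => ρ (n + k)) : EReal)

variable [DecidableEq P]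

/-- The set of `l`-rational strategy profiles (for the players other than `i`) from `v`.
A profile is identified with a complete profile whose `i`-component is irrelevant. -/
def LamRat (G : GameStruct P V) (l : V → EReal) (i : P) (v : V) : Set G.Profile :=
  { σ | ∃ σi : G.Strategy, ∀ h w, G.IsHistFrom v h w → G.CompatExcept i σ (h ++ [w]) →
      G.Consistent l (G.play (Function.update σ i σi) h w) }

/-- `sup_{σ_i} μ_i(⟨σ̄_{-i}, σ_i⟩_v)`. -/
def valAgainst (G : GameStruct P V) (i : P) (σ : G.Profile) (v : V) : EReal :=
  ⨆ σi : G.Strategy, (G.payoff i (G.play (Function.update σ i σi) [] v) : EReal)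

/-- The negotiation function, with the convention `inf ∅ = +∞`. -/
def nego (G : GameStruct P V) (l : V → EReal) : V → EReal :=
  fun v => ⨅ σ ∈ G.LamRat l (G.control v) v, G.valAgainst (G.control v) σ v

/-- A game with steady negotiation. -/
def SteadyNego (G : GameStruct P V) : Prop :=
  ∀ (i : P) (v : V) (l : V → EReal),
    G.LamRat l i v = ∅ ∨
      ∃ σ ∈ G.LamRat l i v, ∀ τ ∈ G.LamRat l i v, G.valAgainst i σ v ≤ G.valAgainst i τ v

/-- Nash equilibrium in `G_{∥v₀}`. -/
def IsNE (G : GameStruct P V) (v₀ : V) (σ : G.Profile) : Prop :=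
  ∀ (i : P) (σ' : G.Strategy),
    G.payoff i (G.play (Function.update σ i σ') [] v₀) ≤ G.payoff i (G.play σ [] v₀)

/-- `ε`-subgame-perfect equilibrium in `G_{∥v₀}`. -/
def IsEpsSPE (G : GameStruct P V) (v₀ : V) (ε : ℝ) (σ : G.Profile) : Prop :=
  ∀ h v, G.IsHistFrom v₀ h v → ∀ (i : P) (σ' : G.Strategy),
    G.payoff i (prependList h (G.play (Function.update σ i σ') h v)) ≤
      G.payoff i (prependList h (G.play σ h v)) + ε

/-- `l` is an `ε`-fixed point of the negotiation function (`±∞` is within `ε` of itself). -/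
def IsEFix (G : GameStruct P V) (ε : ℝ) (l : V → EReal) : Prop :=
  ∀ v, l v - (ε : EReal) ≤ G.nego l v ∧ G.nego l v ≤ l v + (ε : EReal)

/-- Prefix-independent game. -/
def PrefixIndependent (G : GameStruct P V) : Prop :=
  ∀ (h : List V) (ρ : ℕ → V), G.IsHist h → G.IsPlay ρ → ∀ i,
    G.payoff i (prependList h ρ) = G.payoff i ρ

/-- Well-initialized game: every vertex is reachable from `v₀`. -/
def WellInit (G : GameStruct P V) (v₀ : V) : Prop :=
  ∀ v, Relation.ReflTransGen G.E v₀ v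

/-- `G` is the mean-payoff game given by the weight function `π`. -/
def IsMeanPayoff (G : GameStruct P V) (π : P → V → V → ℚ) : Prop :=
  ∀ i ρ, G.payoff i ρ =
    Filter.liminf
      (fun n : ℕ => (∑ k ∈ Finset.range n, (π i (ρ k) (ρ (k + 1)) : ℝ)) / n)
      Filter.atTop

end GameStruct

/-! The concrete games of Examples 2 and 3 of the paper. -/

inductive Pl2 where
  | circ : Pl2
  | sq : Pl2
deriving DecidableEq

instance : Fintype Pl2 :=
  Fintype.ofList [Pl2.circ, Pl2.sq] (by intro x; cases x <;> simp)

inductive V16 where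
  | a : V16
  | b : V16
  | c : V16
  | d : V16
deriving DecidableEq

instance : Fintype V16 :=
  Fintype.ofList [V16.a, V16.b, V16.c, V16.d] (by intro x; cases x <;> simp)

def E16 : V16 → V16 → Prop := fun u v =>
  match u, v with
  | .a, .b => True
  | .b, .a => True
  | .a, .c => True
  | .c, .c => True
  | .b, .d => True
  | .d, .d => True
  | _, _ => False

def ctrl16 : V16 → Pl2 := fun v =>
  match v with
  | .a => .circ
  | .c => .circ
  | .b => .sq
  | .d => .sq

def w16 : Pl2 → V16 → V16 → ℚ
  | .circ, .a, .b => 0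
  | .sq, .a, .b => 3
  | .circ, .b, .a => 0
  | .sq, .b, .a => 3
  | .circ, .a, .c => 0
  | .sq, .a, .c => 0
  | .circ, .c, .c => 1
  | .sq, .c, .c => 1
  | .circ, .b, .d => 0
  | .sq, .b, .d => 0
  | .circ, .d, .d => 2
  | .sq, .d, .d => 2
  | _, _, _ => 0


/-! ### Auxiliary lemmas -/

namespace NoSPE
open GameStruct

set_option linter.unusedSectionVars false

variable {P V : Type} [DecidableEq P]

lemma play_zero (G : GameStruct P V) (σ : G.Profile) (h : List V) (v : V) :
    G.play σ h v 0 = v := rfl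

lemma play_succ (G : GameStruct P V) (σ : G.Profile) (h : List V) (v : V) (n : ℕ) :
    G.play σ h v (n + 1) = G.play σ (h ++ [v]) ((σ (G.control v)).toFun h v) n := by
  simp only [GameStruct.play, Function.iterate_succ_apply]
  rfl

lemma play_one (G : GameStruct P V) (σ : G.Profile) (h : List V) (v : V) :
    G.play σ h v 1 = (σ (G.control v)).toFun h v := by
  rw [play_succ]; rfl

lemma play_succ' (G : GameStruct P V) (σ : G.Profile) (h : List V) (v : V) (n : ℕ) :
    G.play σ h v (n + 1) =
      (σ (G.control (G.play σ h v n))).toFun ((G.step σ)^[n] (h, v)).1 (G.play σ h v n) := by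
  simp only [GameStruct.play, Function.iterate_succ_apply']
  rfl

lemma play_isPlay (G : GameStruct P V) (σ : G.Profile) (h : List V) (v : V) :
    G.IsPlay (G.play σ h v) := by
  intro n
  rw [play_succ']
  exact (σ _).valid _ _

lemma isHistFrom_extend {G : GameStruct P V} {v₀ : V} {h : List V} {v w : V}
    (hh : G.IsHistFrom v₀ h v) (hw : G.E v w) : G.IsHistFrom v₀ (h ++ [v]) w := by
  obtain ⟨hch, hhd⟩ := hh
  constructor
  · rw [List.Chain', List.isChain_append]
    refine ⟨hch, List.isChain_singleton w, ?_⟩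
    intro x hx y hy
    simp only [List.head?_cons, Option.mem_def, Option.some.injEq] at hy
    have : (h ++ [v]).getLast? = some v := by
      rw [List.getLast?_concat]
    rw [this] at hx
    simp only [Option.mem_def, Option.some.injEq] at hx
    subst hx; subst hy; exact hw
  · rw [List.head?_append]
    rw [hhd]
    rfl

lemma play_tail_hist (G : GameStruct P V) (σ : G.Profile) {v₀ : V} {h : List V} {v : V}
    (hh : G.IsHistFrom v₀ h v) :
    ∀ n, ∃ h', G.IsHistFrom v₀ h' (G.play σ h v n) ∧
      ∀ k, G.play σ h' (G.play σ h v n) k = G.play σ h v (n + k) := by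
  intro n
  induction n with
  | zero => exact ⟨h, hh, fun k => by rw [play_zero]; simp⟩
  | succ n ih =>
    obtain ⟨h', H1, H2⟩ := ih
    set u := G.play σ h v n with hu
    have h1 : G.play σ h' u 1 = G.play σ h v (n + 1) := H2 1
    have hmove : G.play σ h' u 1 = (σ (G.control u)).toFun h' u := play_one ..
    refine ⟨h' ++ [u], ?_, ?_⟩
    · rw [← h1, hmove]
      exact isHistFrom_extend H1 ((σ _).valid _ _)
    · intro k
      have : G.play σ (h' ++ [u]) (G.play σ h v (n + 1)) k = G.play σ h' u (k + 1) := by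
        rw [play_succ G σ h' u k, ← hmove, h1]
      rw [this, H2 (k + 1)]
      congr 1
      omega

lemma play_congr (G : GameStruct P V) (σ τ : G.Profile) (h : List V) (v : V)
    (hagree : ∀ h' v', h <+: h' →
      (σ (G.control v')).toFun h' v' = (τ (G.control v')).toFun h' v') :
    ∀ n, (G.step σ)^[n] (h, v) = (G.step τ)^[n] (h, v) ∧ h <+: ((G.step σ)^[n] (h, v)).1 := by
  intro n
  induction n with
  | zero => exact ⟨rfl, List.prefix_rfl⟩
  | succ n ih =>
    obtain ⟨heq, hpre⟩ := ih
    rw [Function.iterate_succ_apply', Function.iterate_succ_apply', ← heq]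
    set p := (G.step σ)^[n] (h, v) with hp
    constructor
    · show (p.1 ++ [p.2], (σ (G.control p.2)).toFun p.1 p.2)
        = (p.1 ++ [p.2], (τ (G.control p.2)).toFun p.1 p.2)
      rw [hagree p.1 p.2 hpre]
    · show h <+: _ ++ [_]
      exact hpre.trans (List.prefix_append _ _)

lemma play_congr' (G : GameStruct P V) (σ τ : G.Profile) (h : List V) (v : V)
    (hagree : ∀ h' v', h <+: h' →
      (σ (G.control v')).toFun h' v' = (τ (G.control v')).toFun h' v') (n : ℕ) :
    G.play σ h v n = G.play τ h v n := by
  unfold GameStruct.play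
  rw [(play_congr G σ τ h v hagree n).1]

lemma liminf_avg_const (f : ℕ → ℝ) (r : ℝ) (N : ℕ) (hf : ∀ n, N ≤ n → f n = r) :
    Filter.liminf (fun n : ℕ => (∑ k ∈ Finset.range n, f k) / n) Filter.atTop = r := by
  apply Filter.Tendsto.liminf_eq
  set C : ℝ := ∑ k ∈ Finset.range N, f k with hC
  have key : ∀ n : ℕ, N ≤ n →
      (∑ k ∈ Finset.range n, f k) = C + ((n : ℝ) - N) * r := by
    intro n hn
    have hsplit : (∑ k ∈ Finset.Ico 0 N, f k) + ∑ k ∈ Finset.Ico N n, f k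
        = ∑ k ∈ Finset.Ico 0 n, f k :=
      Finset.sum_Ico_consecutive f (Nat.zero_le N) hn
    have h2 : ∑ k ∈ Finset.Ico N n, f k = ((n : ℝ) - N) * r := by
      rw [Finset.sum_congr rfl (fun k hk => hf k (Finset.mem_Ico.mp hk).1),
        Finset.sum_const, Nat.card_Ico, nsmul_eq_mul, Nat.cast_sub hn]
    rw [Finset.range_eq_Ico, ← hsplit, h2, ← Finset.range_eq_Ico, ← hC]
  have h0 : Filter.Tendsto (fun n : ℕ => (C - N * r) / n + r) Filter.atTop (nhds r) := by
    have := (tendsto_const_div_atTop_nhds_zero_nat (C - N * r)).add_const r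
    rwa [zero_add] at this
  refine h0.congr' ?_
  filter_upwards [Filter.eventually_ge_atTop (max N 1)] with n hn
  have hN : N ≤ n := le_trans (le_max_left _ _) hn
  have hn0 : (n : ℝ) ≠ 0 := by
    have : 1 ≤ n := le_trans (le_max_right _ _) hn
    positivity
  rw [key n hN]
  field_simp
  ring

/-- Eventual value of the sequence. -/
def TailIs (ρ : ℕ → V16) (x : V16) : Prop := ∃ N, ∀ n, N ≤ n → ρ n = x

lemma tailIs_prepend {ρ : ℕ → V16} {x : V16} (h : List V16) (ht : TailIs ρ x) :
    TailIs (prependList h ρ) x := by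
  obtain ⟨N, hN⟩ := ht
  refine ⟨h.length + N, fun n hn => ?_⟩
  have h1 : ¬ n < h.length := by omega
  simp only [prependList, h1, dif_neg, not_false_iff]
  exact hN _ (by omega)

lemma tailIs_shift {ρ : ℕ → V16} {x : V16} {m : ℕ}
    (ht : TailIs (fun k => ρ (m + k)) x) : TailIs ρ x := by
  obtain ⟨N, hN⟩ := ht
  refine ⟨m + N, fun n hn => ?_⟩
  have : ρ n = ρ (m + (n - m)) := by congr 1; omega
  rw [this]
  exact hN _ (by omega)

lemma tailIs_congr {ρ τ : ℕ → V16} {x : V16} (hh : ∀ n, ρ n = τ n) (ht : TailIs ρ x) :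
    TailIs τ x := by
  obtain ⟨N, hN⟩ := ht
  exact ⟨N, fun n hn => (hh n) ▸ hN n hn⟩

lemma payoff_of_weights (G : GameStruct Pl2 V16) (hmp : G.IsMeanPayoff w16)
    (i : Pl2) (τ : ℕ → V16) (r : ℝ) (N : ℕ)
    (hw : ∀ n, N ≤ n → ((w16 i (τ n) (τ (n + 1)) : ℝ)) = r) :
    G.payoff i τ = r := by
  rw [hmp i τ]
  exact liminf_avg_const _ r N hw

lemma payoff_tailC (G : GameStruct Pl2 V16) (hmp : G.IsMeanPayoff w16)
    (i : Pl2) (τ : ℕ → V16) (ht : TailIs τ .c) : G.payoff i τ = 1 := by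
  obtain ⟨N, hN⟩ := ht
  refine payoff_of_weights G hmp i τ 1 N (fun n hn => ?_)
  rw [hN n hn, hN (n + 1) (by omega)]
  cases i <;> norm_num [w16]

lemma payoff_tailD (G : GameStruct Pl2 V16) (hmp : G.IsMeanPayoff w16)
    (i : Pl2) (τ : ℕ → V16) (ht : TailIs τ .d) : G.payoff i τ = 2 := by
  obtain ⟨N, hN⟩ := ht
  refine payoff_of_weights G hmp i τ 2 N (fun n hn => ?_)
  rw [hN n hn, hN (n + 1) (by omega)]
  cases i <;> norm_num [w16]

lemma payoff_AB (G : GameStruct Pl2 V16) (hmp : G.IsMeanPayoff w16)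
    (τ : ℕ → V16) (N : ℕ)
    (hab : ∀ n, N ≤ n → (E16 (τ n) (τ (n + 1)) ∧ (τ n = .a ∨ τ n = .b))) :
    G.payoff .circ τ = 0 ∧ G.payoff .sq τ = 3 := by
  have hpair : ∀ n, N ≤ n → (τ n = .a ∧ τ (n + 1) = .b) ∨ (τ n = .b ∧ τ (n + 1) = .a) := by
    intro n hn
    obtain ⟨he, hv⟩ := hab n hn
    have hv' := (hab (n + 1) (by omega)).2
    rcases hv with h1 | h1 <;> rcases hv' with h2 | h2 <;>
      rw [h1, h2] at he <;> simp only [E16] at he <;>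
      first
        | exact Or.inl ⟨h1, h2⟩
        | exact Or.inr ⟨h1, h2⟩
  constructor
  · refine payoff_of_weights G hmp .circ τ 0 N (fun n hn => ?_)
    rcases hpair n hn with ⟨h1, h2⟩ | ⟨h1, h2⟩ <;> rw [h1, h2] <;> norm_num [w16]
  · refine payoff_of_weights G hmp .sq τ 3 N (fun n hn => ?_)
    rcases hpair n hn with ⟨h1, h2⟩ | ⟨h1, h2⟩ <;> rw [h1, h2] <;> norm_num [w16]

lemma c_absorb {τ : ℕ → V16} (hp : ∀ n, E16 (τ n) (τ (n + 1))) {n : ℕ} (h : τ n = .c) :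
    ∀ m, n ≤ m → τ m = .c := by
  intro m hm
  induction m with
  | zero => exact (Nat.le_zero.mp hm) ▸ h
  | succ m ih =>
    rcases Nat.lt_or_ge n (m + 1) with hlt | hge
    · have hm' : τ m = .c := ih (by omega)
      have := hp m
      rw [hm'] at this
      cases hmm : τ (m + 1) <;> rw [hmm] at this <;> first | rfl | exact absurd this (by simp [E16])
    · have : n = m + 1 := by omega
      exact this ▸ h

lemma d_absorb {τ : ℕ → V16} (hp : ∀ n, E16 (τ n) (τ (n + 1))) {n : ℕ} (h : τ n = .d) :
    ∀ m, n ≤ m → τ m = .d := by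
  intro m hm
  induction m with
  | zero => exact (Nat.le_zero.mp hm) ▸ h
  | succ m ih =>
    rcases Nat.lt_or_ge n (m + 1) with hlt | hge
    · have hm' : τ m = .d := ih (by omega)
      have := hp m
      rw [hm', ] at this
      cases hmm : τ (m + 1) <;> rw [hmm] at this <;> first | rfl | exact absurd this (by simp [E16])
    · have : n = m + 1 := by omega
      exact this ▸ h

lemma shape {τ : ℕ → V16} (hp : ∀ n, E16 (τ n) (τ (n + 1))) :
    (∀ n, τ n = .a ∨ τ n = .b) ∨ TailIs τ .c ∨ TailIs τ .d := by
  by_cases hcx : ∃ n, τ n = .c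
  · obtain ⟨n, hn⟩ := hcx
    exact Or.inr (Or.inl ⟨n, fun m hm => c_absorb hp hn m hm⟩)
  by_cases hdx : ∃ n, τ n = .d
  · obtain ⟨n, hn⟩ := hdx
    exact Or.inr (Or.inr ⟨n, fun m hm => d_absorb hp hn m hm⟩)
  · left
    intro n
    cases hn : τ n
    · exact Or.inl rfl
    · exact Or.inr rfl
    · exact absurd ⟨n, hn⟩ hcx
    · exact absurd ⟨n, hn⟩ hdx

/-- The constant strategy a→c, b→d, c→c, d→d. -/
def constStrat (G : GameStruct Pl2 V16) (hE : G.E = E16) : G.Strategy :=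
  ⟨fun _ v => match v with | .a => .c | .b => .d | .c => .c | .d => .d,
    by intro h v; rw [hE]; cases v <;> trivial⟩

/-- The strategy a→c, b→a, c→c, d→d. -/
def aStrat (G : GameStruct Pl2 V16) (hE : G.E = E16) : G.Strategy :=
  ⟨fun _ v => match v with | .a => .c | .b => .a | .c => .c | .d => .d,
    by intro h v; rw [hE]; cases v <;> trivial⟩

/-- Deviation: play b at a on histories of length ≤ that of `h`, otherwise follow σ circ. -/
def devStrat (G : GameStruct Pl2 V16) (hE : G.E = E16) (σ : G.Profile) (h : List V16) :
    G.Strategy :=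
  ⟨fun h' v => if h.length < h'.length then (σ Pl2.circ).toFun h' v
    else if v = .a then .b else (σ Pl2.circ).toFun h' v,
    by
      intro h' v
      by_cases hl : h.length < h'.length
      · simpa [hl] using (σ Pl2.circ).valid h' v
      · by_cases hv : v = .a
        · simp only [hl, if_false, hv, if_true, if_pos]
          rw [hE]; trivial
        · simpa [hl, hv] using (σ Pl2.circ).valid h' v⟩

lemma devStrat_apply (G : GameStruct Pl2 V16) (hE : G.E = E16) (σ : G.Profile)
    (h h' : List V16) (v : V16) :
    (devStrat G hE σ h).toFun h' v = if h.length < h'.length then (σ Pl2.circ).toFun h' v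
      else if v = .a then .b else (σ Pl2.circ).toFun h' v := rfl

lemma aStrat_apply (G : GameStruct Pl2 V16) (hE : G.E = E16) (h : List V16) (v : V16) :
    (aStrat G hE).toFun h v
      = match v with | .a => .c | .b => .a | .c => .c | .d => .d := rfl

lemma no_spe_core (G : GameStruct Pl2 V16) (hE : G.E = E16) (hc : G.control = ctrl16)
    (hmp : G.IsMeanPayoff w16) (v₀ : V16) (hstart : ∃ h₀, G.IsHistFrom v₀ h₀ .b) :
    ¬ ∃ σ : G.Profile, G.IsEpsSPE v₀ 0 σ := by
  rintro ⟨σ, H⟩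
  have hplayE : ∀ (τ : G.Profile) (h : List V16) (v : V16) (n : ℕ),
      E16 (G.play τ h v n) (G.play τ h v (n + 1)) := by
    intro τ h v n
    rw [← hE]
    exact play_isPlay G τ h v n
  -- P1: the circle player's payoff from any history ending at a is ≥ 1.
  have P1 : ∀ h, G.IsHistFrom v₀ h .a →
      1 ≤ G.payoff .circ (prependList h (G.play σ h .a)) := by
    intro h hh
    have key := H h .a hh .circ (constStrat G hE)
    have hdev : TailIs (G.play (Function.update σ .circ (constStrat G hE)) h .a) .c := by
      refine ⟨1, fun n hn => ?_⟩
      obtain ⟨m, rfl⟩ := Nat.exists_eq_add_of_le hn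
      clear hn
      induction m with
      | zero =>
        rw [play_one]
        have : G.control .a = .circ := by rw [hc]; rfl
        rw [this, Function.update_self]
        rfl
      | succ m ih =>
        have : 1 + (m + 1) = (1 + m) + 1 := by omega
        rw [this, play_succ']
        rw [ih]
        have : G.control V16.c = .circ := by rw [hc]; rfl
        rw [this, Function.update_self]
        rfl
    have h1 : G.payoff .circ (prependList h
        (G.play (Function.update σ .circ (constStrat G hE)) h .a)) = 1 :=
      payoff_tailC G hmp _ _ (tailIs_prepend h hdev)
    rw [h1, add_zero] at key
    exact key
  -- P2: the square player's payoff from any history ending at b is ≥ 2.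
  have P2 : ∀ h, G.IsHistFrom v₀ h .b →
      2 ≤ G.payoff .sq (prependList h (G.play σ h .b)) := by
    intro h hh
    have key := H h .b hh .sq (constStrat G hE)
    have hdev : TailIs (G.play (Function.update σ .sq (constStrat G hE)) h .b) .d := by
      refine ⟨1, fun n hn => ?_⟩
      obtain ⟨m, rfl⟩ := Nat.exists_eq_add_of_le hn
      clear hn
      induction m with
      | zero =>
        rw [play_one]
        have : G.control .b = .sq := by rw [hc]; rfl
        rw [this, Function.update_self]
        rfl
      | succ m ih =>
        have : 1 + (m + 1) = (1 + m) + 1 := by omega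
        rw [this, play_succ']
        rw [ih]
        have : G.control V16.d = .sq := by rw [hc]; rfl
        rw [this, Function.update_self]
        rfl
    have h1 : G.payoff .sq (prependList h
        (G.play (Function.update σ .sq (constStrat G hE)) h .b)) = 2 :=
      payoff_tailD G hmp _ _ (tailIs_prepend h hdev)
    rw [h1, add_zero] at key
    exact key
  -- Step 1: from any history ending at a, the σ-play ends at c or at d.
  have S1 : ∀ h, G.IsHistFrom v₀ h .a →
      TailIs (G.play σ h .a) .c ∨ TailIs (G.play σ h .a) .d := by
    intro h hh
    rcases shape (hplayE σ h .a) with hab | hcd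
    · exfalso
      have hab' : ∀ n, h.length ≤ n →
          E16 (prependList h (G.play σ h .a) n) (prependList h (G.play σ h .a) (n + 1)) ∧
          (prependList h (G.play σ h .a) n = .a ∨ prependList h (G.play σ h .a) n = .b) := by
        intro n hn
        have e1 : prependList h (G.play σ h .a) n = G.play σ h .a (n - h.length) := by
          simp [prependList, Nat.not_lt.mpr hn]
        have e2 : prependList h (G.play σ h .a) (n + 1) = G.play σ h .a ((n - h.length) + 1) := by
          have : ¬ n + 1 < h.length := by omega
          simp only [prependList, this, dif_neg, not_false_iff]
          congr 1
          omega
        rw [e1, e2]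
        exact ⟨hplayE σ h .a _, hab _⟩
      have := (payoff_AB G hmp _ h.length hab').1
      have := P1 h hh
      linarith
    · exact hcd
  -- Step 2: from any history ending at b, the σ-play ends at d.
  have S2 : ∀ h, G.IsHistFrom v₀ h .b → TailIs (G.play σ h .b) .d := by
    intro h hh
    rcases shape (hplayE σ h .b) with hab | hcd
    · exfalso
      -- the second vertex is a
      have h1a : G.play σ h .b 1 = .a := by
        have he := hplayE σ h .b 0
        rw [play_zero] at he
        rcases hab 1 with h1 | h1
        · exact h1
        · rw [h1] at he; exact absurd he (by simp [E16])
      obtain ⟨h', hh', hpl⟩ := play_tail_hist G σ hh 1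
      rw [h1a] at hh' hpl
      have : TailIs (G.play σ h .b) .c ∨ TailIs (G.play σ h .b) .d := by
        rcases S1 h' hh' with hl | hl
        · exact Or.inl (tailIs_shift (m := 1) (tailIs_congr hpl hl))
        · exact Or.inr (tailIs_shift (m := 1) (tailIs_congr hpl hl))
      rcases this with ⟨N, hN⟩ | ⟨N, hN⟩ <;>
        rcases hab N with h2 | h2 <;> rw [hN N le_rfl] at h2 <;> exact absurd h2 (by simp)
    rcases hcd with hcc | hdd
    · exfalso
      have h1 : G.payoff .sq (prependList h (G.play σ h .b)) = 1 :=
        payoff_tailC G hmp _ _ (tailIs_prepend h hcc)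
      have := P2 h hh
      linarith
    · exact hdd
  -- Step 3: from any history ending at a, the σ-play ends at d.
  have S3 : ∀ h, G.IsHistFrom v₀ h .a → TailIs (G.play σ h .a) .d := by
    intro h hh
    rcases S1 h hh with hcc | hdd
    · exfalso
      have hval : G.payoff .circ (prependList h (G.play σ h .a)) = 1 :=
        payoff_tailC G hmp _ _ (tailIs_prepend h hcc)
      -- deviation for circle: go to b, then follow σ
      set dev := devStrat G hE σ h with hdevdef
      set σ' := Function.update σ .circ dev with hσ'
      have hca : G.control .a = .circ := by rw [hc]; rfl
      have hmove : G.play σ' h .a 1 = .b := by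
        rw [play_one, hca, hσ', Function.update_self, hdevdef, devStrat_apply,
          if_neg (lt_irrefl _), if_pos rfl]
      have hhb : G.IsHistFrom v₀ (h ++ [.a]) .b := by
        refine isHistFrom_extend hh ?_
        rw [hE]; trivial
      have hagree : ∀ h' v', (h ++ [.a]) <+: h' →
          (σ' (G.control v')).toFun h' v' = (σ (G.control v')).toFun h' v' := by
        intro h' v' hpre
        have hl : h.length < h'.length := by
          have := hpre.length_le
          simp only [List.length_append, List.length_singleton] at this
          omega
        by_cases hv : G.control v' = Pl2.circ
        · rw [hv, hσ', Function.update_self, hdevdef, devStrat_apply, if_pos hl]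
        · rw [hσ', Function.update_of_ne hv]
      have hshift : ∀ k, G.play σ' h .a (1 + k) = G.play σ (h ++ [.a]) .b k := by
        intro k
        have e1 : (1 : ℕ) + k = k + 1 := by omega
        rw [e1, play_succ, hca]
        have : (σ' Pl2.circ).toFun h .a = .b := by
          rw [hσ', Function.update_self, hdevdef, devStrat_apply,
            if_neg (lt_irrefl _), if_pos rfl]
        rw [this]
        exact play_congr' G σ' σ (h ++ [.a]) .b hagree k
      have htail : TailIs (G.play σ' h .a) .d := by
        obtain ⟨N, hN⟩ := S2 (h ++ [.a]) hhb
        refine ⟨1 + N, fun n hn => ?_⟩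
        have : n = 1 + (n - 1) := by omega
        rw [this, hshift]
        exact hN _ (by omega)
      have hdevval : G.payoff .circ (prependList h (G.play σ' h .a)) = 2 :=
        payoff_tailD G hmp _ _ (tailIs_prepend h htail)
      have key := H h .a hh .circ dev
      rw [← hσ'] at key
      rw [hdevval, hval, add_zero] at key
      linarith
    · exact hdd
  -- Step 4: σ's circle strategy moves from a to b after every history.
  have S4 : ∀ h, G.IsHistFrom v₀ h .a → (σ Pl2.circ).toFun h .a = .b := by
    intro h hh
    have hca : G.control .a = .circ := by rw [hc]; rfl
    have h1 : G.play σ h .a 1 = (σ Pl2.circ).toFun h .a := by rw [play_one, hca]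
    have he := hplayE σ h .a 0
    rw [play_zero] at he
    cases hm : G.play σ h .a 1 with
    | b => rw [← h1, hm]
    | a => rw [hm] at he; exact absurd he (by simp [E16])
    | d => rw [hm] at he; exact absurd he (by simp [E16])
    | c =>
      exfalso
      have hcc : TailIs (G.play σ h .a) .c := ⟨1, fun m hm' => c_absorb (hplayE σ h .a) hm m hm'⟩
      obtain ⟨N, hN⟩ := S3 h hh
      obtain ⟨M, hM⟩ := hcc
      have e1 := hN (max N M) (le_max_left _ _)
      have e2 := hM (max N M) (le_max_right _ _)
      rw [e1] at e2
      exact absurd e2 (by simp)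
  -- Step 5: square deviates at b by always going back to a.
  obtain ⟨h₀, hb₀⟩ := hstart
  set as := aStrat G hE with hasdef
  set σ' := Function.update σ .sq as with hσ'
  have hcb : G.control .b = .sq := by rw [hc]; rfl
  have hca : G.control .a = .circ := by rw [hc]; rfl
  have inv : ∀ n, G.IsHistFrom v₀ ((G.step σ')^[n] (h₀, V16.b)).1 ((G.step σ')^[n] (h₀, V16.b)).2
      ∧ (((G.step σ')^[n] (h₀, V16.b)).2 = .a ∨ ((G.step σ')^[n] (h₀, V16.b)).2 = .b) := by
    intro n
    induction n with
    | zero => exact ⟨hb₀, Or.inr rfl⟩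
    | succ n ih =>
      obtain ⟨ihh, ihv⟩ := ih
      rw [Function.iterate_succ_apply']
      set p := (G.step σ')^[n] (h₀, V16.b) with hp
      have hstep : G.step σ' p = (p.1 ++ [p.2], (σ' (G.control p.2)).toFun p.1 p.2) := rfl
      rcases ihv with hv | hv
      · -- at a: circle plays, and by S4 it goes to b
        have : (σ' (G.control p.2)).toFun p.1 p.2 = .b := by
          rw [hv, hca, hσ', Function.update_of_ne (by simp)]
          exact S4 p.1 (hv ▸ ihh)
        rw [hstep, this]
        refine ⟨isHistFrom_extend ihh ?_, Or.inr rfl⟩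
        rw [hv, hE]; trivial
      · -- at b: square plays as, going to a
        have : (σ' (G.control p.2)).toFun p.1 p.2 = .a := by
          rw [hv, hcb, hσ', Function.update_self, hasdef, aStrat_apply]
        rw [hstep, this]
        refine ⟨isHistFrom_extend ihh ?_, Or.inl rfl⟩
        rw [hv, hE]; trivial
  have hab : ∀ n, G.play σ' h₀ .b n = .a ∨ G.play σ' h₀ .b n = .b := fun n => (inv n).2
  have habp : ∀ n, h₀.length ≤ n →
      E16 (prependList h₀ (G.play σ' h₀ .b) n) (prependList h₀ (G.play σ' h₀ .b) (n + 1)) ∧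
      (prependList h₀ (G.play σ' h₀ .b) n = .a ∨ prependList h₀ (G.play σ' h₀ .b) n = .b) := by
    intro n hn
    have e1 : prependList h₀ (G.play σ' h₀ .b) n = G.play σ' h₀ .b (n - h₀.length) := by
      simp [prependList, Nat.not_lt.mpr hn]
    have e2 : prependList h₀ (G.play σ' h₀ .b) (n + 1)
        = G.play σ' h₀ .b ((n - h₀.length) + 1) := by
      have : ¬ n + 1 < h₀.length := by omega
      simp only [prependList, this, dif_neg, not_false_iff]
      congr 1
      omega
    rw [e1, e2]
    exact ⟨hplayE σ' h₀ .b _, hab _⟩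
  have hdevval : G.payoff .sq (prependList h₀ (G.play σ' h₀ .b)) = 3 :=
    (payoff_AB G hmp _ h₀.length habp).2
  have hval : G.payoff .sq (prependList h₀ (G.play σ h₀ .b)) = 2 :=
    payoff_tailD G hmp _ _ (tailIs_prepend h₀ (S2 h₀ hb₀))
  have key := H h₀ .b hb₀ .sq as
  rw [← hσ'] at key
  rw [hdevval, hval, add_zero] at key
  linarith

end NoSPE

open GameStruct in
/-- The mean-payoff game of Example 2 admits no SPE from vertex `a`
and no SPE from vertex `b`. -/
theorem example_game_no_SPE
    (G : GameStruct Pl2 V16) (hE : G.E = E16) (hc : G.control = ctrl16)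
    (hmp : G.IsMeanPayoff w16) :
    (¬ ∃ σ : G.Profile, G.IsEpsSPE V16.a 0 σ) ∧
      (¬ ∃ σ : G.Profile, G.IsEpsSPE V16.b 0 σ) := by
  constructor
  · refine NoSPE.no_spe_core G hE hc hmp V16.a ⟨[V16.a], ?_, ?_⟩
    · rw [hE]
      simp [E16, List.Chain', List.isChain_pair]
    · rfl
  · refine NoSPE.no_spe_core G hE hc hmp V16.b ⟨[], ?_, ?_⟩
    · rw [hE]
      simp [List.Chain', List.isChain_singleton]
    · rfl
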